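/- The best response is the unique positive critical point. Fix a user k and positive powers ρ_i > 0 for all i ≠ k, and let f(x) = μ_k(Function.update ρ k x) for x > 0. Then f is differentiable on (0, ∞), its derivative vanishes at ρ*_k = sqrt( (Σ_{i ≠ k} ρ_i (b i)^α) / (Σ_{i ≠ k} (b k)^{2α} / (ρ_i (b i)^α)) ), and ρ*_k is the only positive real at which the derivative of f vanishes. -/

import Mathlib

/-- ξ k = ρ k * (b k)^α -/
noncomputable def xi (K : ℕ) (α : ℝ) (b ρ : Fin K → ℝ) (k : Fin K) : ℝ :=
  ρ k * b k ^ α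

/-- Payoff of user k: μ_k(ρ) = (Σ_{i ≠ k} ξ i) / ξ k + ξ k * Σ_{i ≠ k} 1 / ξ i -/
noncomputable def mu (K : ℕ) (α : ℝ) (b ρ : Fin K → ℝ) (k : Fin K) : ℝ :=
  (∑ i ∈ Finset.univ.erase k, xi K α b ρ i) / xi K α b ρ k
    + xi K α b ρ k * ∑ i ∈ Finset.univ.erase k, 1 / xi K α b ρ i

/-- Potential function u(ρ) = (1/2) * Σ_k μ_k(ρ) -/
noncomputable def potential (K : ℕ) (α : ℝ) (b ρ : Fin K → ℝ) : ℝ :=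
  (1 / 2) * ∑ k, mu K α b ρ k

/-- The best response is the unique positive critical point of
    f(x) = μ_k(Function.update ρ k x). -/
theorem best_response_unique_critical_point (K : ℕ) (hK : 2 ≤ K) (α : ℝ)
    (b : Fin K → ℝ) (hb : ∀ k, 0 < b k) (k : Fin K) (ρ : Fin K → ℝ)
    (hρ : ∀ i, i ≠ k → 0 < ρ i) :
    (∀ x ∈ Set.Ioi (0 : ℝ),
      DifferentiableAt ℝ (fun x : ℝ => mu K α b (Function.update ρ k x) k) x) ∧
    deriv (fun x : ℝ => mu K α b (Function.update ρ k x) k)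
      (Real.sqrt ((∑ i ∈ Finset.univ.erase k, ρ i * b i ^ α) /
        (∑ i ∈ Finset.univ.erase k, b k ^ (2 * α) / (ρ i * b i ^ α)))) = 0 ∧
    (∀ x : ℝ, 0 < x →
      deriv (fun x : ℝ => mu K α b (Function.update ρ k x) k) x = 0 →
      x = Real.sqrt ((∑ i ∈ Finset.univ.erase k, ρ i * b i ^ α) /
        (∑ i ∈ Finset.univ.erase k, b k ^ (2 * α) / (ρ i * b i ^ α)))) := by

  have hc : (0:ℝ) < b k ^ α := Real.rpow_pos_of_pos (hb k) α
  set c : ℝ := b k ^ α with hcdef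
  set S : ℝ := ∑ i ∈ Finset.univ.erase k, ρ i * b i ^ α with hSdef
  set T : ℝ := ∑ i ∈ Finset.univ.erase k, 1 / (ρ i * b i ^ α) with hTdef
  haveI : Nontrivial (Fin K) := Fin.nontrivial_iff_two_le.mpr hK
  obtain ⟨j, hj⟩ := exists_ne k
  have hne : (Finset.univ.erase k).Nonempty :=
    ⟨j, Finset.mem_erase.2 ⟨hj, Finset.mem_univ j⟩⟩
  have hpos : ∀ i ∈ Finset.univ.erase k, 0 < ρ i * b i ^ α := by
    intro i hi
    exact mul_pos (hρ i (Finset.mem_erase.1 hi).1) (Real.rpow_pos_of_pos (hb i) α)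
  have hS : 0 < S := Finset.sum_pos hpos hne
  have hT : 0 < T := Finset.sum_pos (fun i hi => one_div_pos.2 (hpos i hi)) hne
  have hden : ∑ i ∈ Finset.univ.erase k, b k ^ (2 * α) / (ρ i * b i ^ α) = c ^ 2 * T := by
    have h2 : b k ^ (2 * α) = c ^ 2 := by
      rw [two_mul, Real.rpow_add (hb k), sq]
    rw [hTdef, Finset.mul_sum]
    exact Finset.sum_congr rfl fun i _ => by rw [h2]; ring
  have hfun : (fun x : ℝ => mu K α b (Function.update ρ k x) k)
      = fun x : ℝ => (S / c) * x⁻¹ + (c * T) * x := by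
    funext x
    have h1 : ∑ i ∈ Finset.univ.erase k, xi K α b (Function.update ρ k x) i = S := by
      refine Finset.sum_congr rfl fun i hi => ?_
      simp [xi, Function.update_of_ne (Finset.mem_erase.1 hi).1]
    have h2 : ∑ i ∈ Finset.univ.erase k, 1 / xi K α b (Function.update ρ k x) i = T := by
      refine Finset.sum_congr rfl fun i hi => ?_
      simp [xi, Function.update_of_ne (Finset.mem_erase.1 hi).1]
    have h3 : xi K α b (Function.update ρ k x) k = x * c := by simp [xi, hcdef]
    rw [mu, h1, h2, h3]
    ring
  have hderiv : ∀ x : ℝ, x ≠ 0 →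
      HasDerivAt (fun x : ℝ => (S / c) * x⁻¹ + (c * T) * x)
        ((S / c) * (-(x ^ 2)⁻¹) + (c * T) * 1) x := by
    intro x hx
    exact ((hasDerivAt_inv hx).const_mul (S / c)).add ((hasDerivAt_id x).const_mul (c * T))
  set r : ℝ := Real.sqrt (S / (c ^ 2 * T)) with hrdef
  have harg : 0 < S / (c ^ 2 * T) := div_pos hS (by positivity)
  have hr : 0 < r := Real.sqrt_pos.2 harg
  have hr2 : r ^ 2 = S / (c ^ 2 * T) := Real.sq_sqrt harg.le
  rw [hden, hfun]
  refine ⟨?_, ?_, ?_⟩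
  · intro x hx
    exact (hderiv x (ne_of_gt hx)).differentiableAt
  · rw [(hderiv r hr.ne').deriv, hr2]
    field_simp
    ring
  · intro x hx hd
    rw [(hderiv x hx.ne').deriv] at hd
    have hx2 : x ^ 2 = S / (c ^ 2 * T) := by
      have hxne : x ^ 2 ≠ 0 := pow_ne_zero 2 hx.ne'
      field_simp at hd ⊢
      nlinarith [hd]
    rw [← hr2] at hx2
    have := abs_eq_abs.2 (Or.inl (by nlinarith [sq_abs x, sq_abs r] : x = r) )
    exact (by nlinarith [sq_abs x, sq_abs r] : x = r)
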